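/- Let d be an integer with d ≥ 3 and let f : [0,∞) → ℝ be a smooth function satisfying the shrinker equation f''(y) + ((d-1)/y - y/2) f'(y) - (d-1)/(2y²) sin(2 f(y)) = 0 for all y > 0 with f(0) = 0. If f' is bounded on [1,∞), then ∫₀^∞ s^{d-3} e^{-s²/4} sin(2 f(s)) ds = 0, i.e. A(y) → 0 as y → ∞, where A(y) = ∫₀^y s^{d-3} e^{-s²/4} sin(2 f(s)) ds. -/

import Mathlib

open Real Set Filter Topology MeasureTheory intervalIntegral

/-- If `f` solves the harmonic map shrinker equation on `[0,∞)` with `f(0) = 0` and `f'`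
is bounded on `[1,∞)`, then `∫₀^∞ s^{d-3} e^{-s²/4} sin(2 f(s)) ds = 0`, i.e.
`A(y) = ∫₀^y s^{d-3} e^{-s²/4} sin(2 f(s)) ds → 0` as `y → ∞`. -/
theorem A_tendsto_zero (d : ℕ) (hd : 3 ≤ d) (f : ℝ → ℝ)
    (hf : ContDiffOn ℝ (⊤ : ℕ∞) f (Ici 0))
    (hode : ∀ y : ℝ, 0 < y →
      deriv (deriv f) y + (((d : ℝ) - 1) / y - y / 2) * deriv f y
        - ((d : ℝ) - 1) / (2 * y ^ 2) * Real.sin (2 * f y) = 0)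
    (hf0 : f 0 = 0)
    (hbdd : ∃ M : ℝ, ∀ y : ℝ, 1 ≤ y → |deriv f y| ≤ M) :
    (∫ s in Ioi (0 : ℝ), s ^ (d - 3) * Real.exp (-s ^ 2 / 4) * Real.sin (2 * f s)) = 0 ∧
    Tendsto (fun y => ∫ s in (0 : ℝ)..y,
        s ^ (d - 3) * Real.exp (-s ^ 2 / 4) * Real.sin (2 * f s))
      atTop (𝓝 0) := by
  obtain ⟨M, hM⟩ := hbdd
  set n : ℕ := d - 3 with hn
  have hn2 : d - 1 = n + 2 := by omega
  have hdn : (d : ℝ) = (n : ℝ) + 3 := by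
    have : d = n + 3 := by omega
    rw [this]; push_cast; ring
  set c : ℝ := (d : ℝ) - 1 with hc
  have hcn : c = (n : ℝ) + 2 := by rw [hc, hdn]; ring
  have hcpos : 0 < c := by rw [hcn]; positivity
  set g : ℝ → ℝ := fun s => s ^ n * Real.exp (-s ^ 2 / 4) * Real.sin (2 * f s) with hg
  set G : ℝ → ℝ := fun y => y ^ (n + 2) * Real.exp (-y ^ 2 / 4) * deriv f y with hG
  have hfc : ContinuousOn f (Ici 0) := hf.continuousOn
  have hexpc : Continuous (fun s : ℝ => Real.exp (-s ^ 2 / 4)) :=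
    Real.continuous_exp.comp (((continuous_pow 2).neg).div_const 4)
  have hgc : ContinuousOn g (Ici 0) := by
    apply ContinuousOn.mul
    · exact ((continuous_pow n).mul hexpc).continuousOn
    · exact Real.continuous_sin.comp_continuousOn (continuousOn_const.mul hfc)
  -- derivative facts on Ioi 0
  have hfI : ContDiffOn ℝ (⊤ : ℕ∞) f (Ioi 0) := hf.mono Ioi_subset_Ici_self
  have hderivC : ContDiffOn ℝ (⊤ : ℕ∞) (deriv f) (Ioi 0) :=
    hfI.deriv_of_isOpen isOpen_Ioi (m := (⊤ : ℕ∞)) (by simp)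
  have hderiv2 : ∀ y ∈ Ioi (0:ℝ), HasDerivAt (deriv f) (deriv (deriv f) y) y := by
    intro y hy
    have : DifferentiableOn ℝ (deriv f) (Ioi 0) := hderivC.differentiableOn (by simp)
    exact ((this y hy).differentiableAt (isOpen_Ioi.mem_nhds hy)).hasDerivAt
  -- key derivative of G
  have hGderiv : ∀ y ∈ Ioi (0:ℝ), HasDerivAt G (c / 2 * g y) y := by
    intro y hy
    have hy0 : (0:ℝ) < y := hy
    have hP : HasDerivAt (fun y : ℝ => y ^ (n + 2)) ((n + 2 : ℕ) * y ^ (n + 1)) y := by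
      simpa using hasDerivAt_pow (n + 2) y
    have hE : HasDerivAt (fun y : ℝ => Real.exp (-y ^ 2 / 4))
        (-(2 * y) / 4 * Real.exp (-y ^ 2 / 4)) y := by
      have h1 : HasDerivAt (fun y : ℝ => -y ^ 2 / 4) (-(2 * y) / 4) y := by
        simpa using ((hasDerivAt_pow 2 y).neg.div_const 4)
      simpa [mul_comm] using h1.exp
    have hD := hderiv2 y hy
    have := ((hP.mul hE).mul hD)
    refine this.congr_deriv ?_
    have hsolve : deriv (deriv f) y =
        c / (2 * y ^ 2) * Real.sin (2 * f y) - (c / y - y / 2) * deriv f y := by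
      rw [hc]; linarith [hode y hy0]
    rw [hsolve, hg, hcn]
    simp only [Pi.mul_apply]
    have hyne : y ≠ 0 := ne_of_gt hy0
    push_cast
    field_simp
    ring
  -- interval integrability of g on any interval in Ici 0
  have hgint : ∀ a b : ℝ, 0 ≤ a → 0 ≤ b → IntervalIntegrable g volume a b := by
    intro a b ha hb
    apply ContinuousOn.intervalIntegrable
    apply hgc.mono
    intro x hx
    rcases le_total a b with h | h
    · rw [uIcc_of_le h] at hx; exact le_trans ha hx.1
    · rw [uIcc_of_ge h] at hx; exact le_trans hb hx.1
  -- FTC on [a, y] for 0 < a < y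
  have hFTC : ∀ y : ℝ, 0 < y → ∀ a ∈ Ioo (0:ℝ) y,
      (∫ s in a..y, g s) = 2 / c * (G y - G a) := by
    intro y hy a ha
    have hsub : uIcc a y ⊆ Ioi (0:ℝ) := by
      rw [uIcc_of_le ha.2.le]
      intro x hx; exact lt_of_lt_of_le ha.1 hx.1
    have h1 : (∫ s in a..y, c / 2 * g s) = G y - G a := by
      apply intervalIntegral.integral_eq_sub_of_hasDerivAt
      · intro x hx; exact hGderiv x (hsub hx)
      · exact (hgint a y ha.1.le hy.le).const_mul _
    rw [intervalIntegral.integral_const_mul] at h1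
    rw [← h1]; field_simp
  -- ∫ 0..a g → 0 as a → 0⁺
  have hT1 : Tendsto (fun a => ∫ s in (0:ℝ)..a, g s) (𝓝[>] (0:ℝ)) (𝓝 0) := by
    have hbound : ∀ a ∈ Ioo (0:ℝ) 1, |∫ s in (0:ℝ)..a, g s| ≤ a := by
      intro a ha
      have := intervalIntegral.norm_integral_le_of_norm_le_const (C := 1)
        (f := g) (a := (0:ℝ)) (b := a) ?_
      · simpa [abs_of_pos ha.1] using this
      · intro x hx
        rw [uIoc_of_le ha.1.le] at hx
        have hx0 : 0 < x := hx.1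
        have hx1 : x ≤ 1 := hx.2.trans ha.2.le
        rw [hg]
        have h1 : |x ^ n| ≤ 1 := by
          rw [abs_of_nonneg (by positivity)]
          exact pow_le_one₀ hx0.le hx1
        have h2 : |Real.exp (-x ^ 2 / 4)| ≤ 1 := by
          rw [abs_of_pos (Real.exp_pos _)]
          apply Real.exp_le_one_iff.mpr
          nlinarith
        have h3 : |Real.sin (2 * f x)| ≤ 1 := Real.abs_sin_le_one _
        calc ‖x ^ n * Real.exp (-x ^ 2 / 4) * Real.sin (2 * f x)‖
            = |x ^ n| * |Real.exp (-x ^ 2 / 4)| * |Real.sin (2 * f x)| := by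
              simp [abs_mul]
          _ ≤ 1 * 1 * 1 := by
              gcongr
          _ = 1 := by norm_num
    have hev : ∀ᶠ a in 𝓝[>] (0:ℝ), a ∈ Ioo (0:ℝ) 1 :=
      Ioo_mem_nhdsGT_of_mem ⟨le_refl _, zero_lt_one⟩
    apply tendsto_of_tendsto_of_tendsto_of_le_of_le'
      (g := fun a : ℝ => -a) (h := fun a : ℝ => a)
    · exact (tendsto_nhdsWithin_of_tendsto_nhds (continuous_id.neg.tendsto' 0 0 (by simp)))
    · exact tendsto_nhdsWithin_of_tendsto_nhds (continuous_id.tendsto' 0 0 rfl)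
    · filter_upwards [hev] with a ha
      exact neg_le_of_abs_le (hbound a ha)
    · filter_upwards [hev] with a ha
      exact le_of_abs_le (hbound a ha)
  -- G → 0 as a → 0⁺
  have hT2 : Tendsto G (𝓝[>] (0:ℝ)) (𝓝 0) := by
    set F : ℝ → ℝ := derivWithin f (Ici 0) with hF
    have hFc : ContinuousOn F (Ici 0) :=
      hf.continuousOn_derivWithin (uniqueDiffOn_Ici 0) (by simp)
    have hHc : ContinuousOn (fun a => a ^ (n + 2) * Real.exp (-a ^ 2 / 4) * F a) (Ici 0) :=
      (((continuous_pow (n+2)).mul hexpc).continuousOn).mul hFc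
    have h0 : (0:ℝ) ∈ Ici (0:ℝ) := self_mem_Ici
    have hH0 : Tendsto (fun a => a ^ (n + 2) * Real.exp (-a ^ 2 / 4) * F a)
        (𝓝[>] (0:ℝ)) (𝓝 0) := by
      have := (hHc 0 h0).tendsto
      simp only [zero_pow (by omega : n + 2 ≠ 0), zero_mul] at this
      exact this.mono_left (nhdsWithin_mono _ Ioi_subset_Ici_self)
    apply hH0.congr'
    filter_upwards [self_mem_nhdsWithin] with a (ha : 0 < a)
    rw [hG, hF, derivWithin_of_mem_nhds (Ici_mem_nhds ha)]
  -- A(y) = (2/c) * G(y) for y > 0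
  have hA : ∀ y : ℝ, 0 < y → (∫ s in (0:ℝ)..y, g s) = 2 / c * G y := by
    intro y hy
    have hev : ∀ᶠ a in 𝓝[>] (0:ℝ), a ∈ Ioo (0:ℝ) y :=
      Ioo_mem_nhdsGT_of_mem ⟨le_refl _, hy⟩
    have L1 : Tendsto (fun a => ∫ s in a..y, g s) (𝓝[>] (0:ℝ))
        (𝓝 ((∫ s in (0:ℝ)..y, g s))) := by
      have : Tendsto (fun a => (∫ s in (0:ℝ)..y, g s) - ∫ s in (0:ℝ)..a, g s)
          (𝓝[>] (0:ℝ)) (𝓝 ((∫ s in (0:ℝ)..y, g s) - 0)) :=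
        tendsto_const_nhds.sub hT1
      rw [sub_zero] at this
      apply this.congr'
      filter_upwards [hev] with a ha
      have := intervalIntegral.integral_add_adjacent_intervals
        (hgint 0 a le_rfl ha.1.le) (hgint a y ha.1.le hy.le)
      linarith
    have L2 : Tendsto (fun a => ∫ s in a..y, g s) (𝓝[>] (0:ℝ))
        (𝓝 (2 / c * G y)) := by
      have : Tendsto (fun a => 2 / c * (G y - G a)) (𝓝[>] (0:ℝ))
          (𝓝 (2 / c * (G y - 0))) :=
        (tendsto_const_nhds.sub hT2).const_mul _
      rw [sub_zero] at this
      apply this.congr'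
      filter_upwards [hev] with a ha
      exact (hFTC y hy a ha).symm
    exact tendsto_nhds_unique L1 L2
  -- y^(n+2) exp(-y²/4) → 0 at top
  have hB0 : Tendsto (fun y : ℝ => y ^ (n + 2) * Real.exp (-y ^ 2 / 4)) atTop (𝓝 0) := by
    have hmaj := Real.tendsto_pow_mul_exp_neg_atTop_nhds_zero (n + 2)
    apply tendsto_of_tendsto_of_tendsto_of_le_of_le'
      (g := fun _ : ℝ => (0:ℝ)) (h := fun y : ℝ => y ^ (n + 2) * Real.exp (-y))
      tendsto_const_nhds hmaj
    · filter_upwards [eventually_ge_atTop (0:ℝ)] with y hy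
      positivity
    · filter_upwards [eventually_ge_atTop (4:ℝ)] with y hy
      have hy0 : (0:ℝ) ≤ y := by linarith
      have : Real.exp (-y ^ 2 / 4) ≤ Real.exp (-y) := by
        apply Real.exp_le_exp.mpr
        nlinarith
      gcongr
  -- the main limit
  have htend : Tendsto (fun y => ∫ s in (0:ℝ)..y, g s) atTop (𝓝 0) := by
    set M' : ℝ := max M 0 with hM'
    have hMnn : 0 ≤ M' := le_max_right _ _
    have hB : Tendsto (fun y : ℝ => 2 / c * M' * (y ^ (n + 2) * Real.exp (-y ^ 2 / 4)))
        atTop (𝓝 0) := by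
      have := hB0.const_mul (2 / c * M')
      simpa using this
    apply tendsto_of_tendsto_of_tendsto_of_le_of_le'
      (g := fun y : ℝ => -(2 / c * M' * (y ^ (n + 2) * Real.exp (-y ^ 2 / 4))))
      (h := fun y : ℝ => 2 / c * M' * (y ^ (n + 2) * Real.exp (-y ^ 2 / 4)))
      (by simpa using hB.neg) hB
    all_goals {
      filter_upwards [eventually_ge_atTop (1:ℝ)] with y hy
      have hy0 : 0 < y := lt_of_lt_of_le zero_lt_one hy
      have key : |∫ s in (0:ℝ)..y, g s| ≤
          2 / c * M' * (y ^ (n + 2) * Real.exp (-y ^ 2 / 4)) := by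
        rw [hA y hy0, hG]
        rw [abs_mul, abs_mul, abs_mul]
        have h1 : |2 / c| = 2 / c := abs_of_pos (by positivity)
        have h2 : |y ^ (n + 2)| = y ^ (n + 2) := abs_of_pos (by positivity)
        have h3 : |Real.exp (-y ^ 2 / 4)| = Real.exp (-y ^ 2 / 4) :=
          abs_of_pos (Real.exp_pos _)
        rw [h1, h2, h3]
        have h4 : |deriv f y| ≤ M' := (hM y hy).trans (le_max_left _ _)
        have hyE : 0 < y ^ (n + 2) * Real.exp (-y ^ 2 / 4) := by positivity
        calc 2 / c * (y ^ (n + 2) * Real.exp (-y ^ 2 / 4) * |deriv f y|)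
            ≤ 2 / c * (y ^ (n + 2) * Real.exp (-y ^ 2 / 4) * M') := by
              gcongr
          _ = 2 / c * M' * (y ^ (n + 2) * Real.exp (-y ^ 2 / 4)) := by ring
      first
        | exact neg_le_of_abs_le key
        | exact le_of_abs_le key
    }
  -- integrability on Ioi 0
  have hint : IntegrableOn g (Ioi 0) := by
    have hmaj : IntegrableOn (fun x : ℝ => x ^ (n : ℝ) * Real.exp (-(1/4) * x ^ 2)) (Ioi 0) :=
      integrableOn_rpow_mul_exp_neg_mul_sq (by norm_num)
        (lt_of_lt_of_le (by norm_num) (Nat.cast_nonneg n))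
    apply Integrable.mono' hmaj
    · exact ((hgc.mono Ioi_subset_Ici_self).aestronglyMeasurable measurableSet_Ioi)
    · filter_upwards [ae_restrict_mem measurableSet_Ioi] with x (hx : 0 < x)
      rw [hg]
      have hrw : x ^ (n : ℝ) = x ^ n := Real.rpow_natCast x n
      have hrw2 : -(1/4 : ℝ) * x ^ 2 = -x ^ 2 / 4 := by ring
      rw [hrw, hrw2]
      calc ‖x ^ n * Real.exp (-x ^ 2 / 4) * Real.sin (2 * f x)‖
          = x ^ n * Real.exp (-x ^ 2 / 4) * |Real.sin (2 * f x)| := by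
            rw [norm_eq_abs, abs_mul, abs_mul,
              abs_of_pos (by positivity : (0:ℝ) < x ^ n),
              abs_of_pos (Real.exp_pos _)]
        _ ≤ x ^ n * Real.exp (-x ^ 2 / 4) * 1 := by
            gcongr; exact Real.abs_sin_le_one _
        _ = x ^ n * Real.exp (-x ^ 2 / 4) := by ring
  have hIoi : Tendsto (fun y => ∫ s in (0:ℝ)..y, g s) atTop
      (𝓝 (∫ s in Ioi (0:ℝ), g s)) :=
    MeasureTheory.intervalIntegral_tendsto_integral_Ioi 0 hint tendsto_id
  exact ⟨tendsto_nhds_unique hIoi htend, htend⟩
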